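/- Tensors of alignment type III have vanishing scalar polynomial invariants (the VSI property): let T₁,…,T_k be tensors on ℝ⁴ (of ranks r₁,…,r_k) such that, relative to a common null frame, every component of nonnegative boost weight of each T_m vanishes. Then every full contraction of (T₁,…,T_k), for every perfect pairing p of the combined index slots, equals zero. In particular, all scalar polynomial invariants constructed from a type III torsion tensor and its (type III) covariant derivatives vanish. -/
import Mathlib

noncomputable def eta : Fin 4 → Fin 4 → ℝ := fun a b =>
  if (a = 0 ∧ b = 1) ∨ (a = 1 ∧ b = 0) then -1
  else if (a = 2 ∧ b = 2) ∨ (a = 3 ∧ b = 3) then 1 else 0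

def bw {r : ℕ} (a : Fin r → Fin 4) : ℤ :=
  ((Finset.univ.filter fun i => a i = 0).card : ℤ) -
    ((Finset.univ.filter fun i => a i = 1).card : ℤ)

abbrev Slots {k : ℕ} (r : Fin k → ℕ) : Type := (m : Fin k) × Fin (r m)

noncomputable def contraction {k : ℕ} (r : Fin k → ℕ) (T : ∀ m, (Fin (r m) → Fin 4) → ℝ)
    (p : Slots r → Slots r) (S : Finset (Slots r)) : ℝ :=
  ∑ f : Slots r → Fin 4,
    (∏ i ∈ S, eta (f i) (f (p i))) * ∏ m, T m (fun j => f ⟨m, j⟩)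

def wt : Fin 4 → ℤ := fun a => if a = 0 then 1 else if a = 1 then -1 else 0

lemma wt_add_eq_zero_of_eta_ne_zero {a b : Fin 4} (h : eta a b ≠ 0) : wt a + wt b = 0 := by
  fin_cases a <;> fin_cases b <;> simp_all [eta, wt]

lemma bw_eq_sum {r : ℕ} (a : Fin r → Fin 4) : bw a = ∑ i, wt (a i) := by
  have h : ∀ x : Fin 4, wt x = (if x = 0 then (1:ℤ) else 0) - (if x = 1 then (1:ℤ) else 0) := by
    decide
  simp only [h, Finset.sum_sub_distrib, bw]
  congr 1 <;> simp [Finset.sum_ite, Finset.sum_const]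

/-- tensors of alignment type III have vanishing scalar polynomial invariants: if
every component of nonnegative boost weight of each of the tensors `T₁,…,T_k` (`k ≥ 1`) vanishes,
then every full contraction of them vanishes. -/
theorem contraction_typeIII_vanishes
    {k : ℕ} (hk : 0 < k) (r : Fin k → ℕ) (T : ∀ m, (Fin (r m) → Fin 4) → ℝ)
    (hIII : ∀ m a, 0 ≤ bw a → T m a = 0)
    (p : Slots r → Slots r) (S : Finset (Slots r))
    (hp : p ∘ p = id) (hfp : ∀ i, p i ≠ i) (hS : ∀ i, i ∈ S ↔ p i ∉ S) :
    contraction r T p S = 0 := by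
  have ppi : ∀ i, p (p i) = i := fun i => congrFun hp i
  unfold contraction
  apply Finset.sum_eq_zero
  intro f _
  by_contra h
  obtain ⟨hη, hT⟩ := mul_ne_zero_iff.mp h
  -- total weight
  set W : ℤ := ∑ i : Slots r, wt (f i) with hW
  -- from η: W = 0
  have hW0 : W = 0 := by
    have hsplit : ∑ i ∈ S, wt (f i) + ∑ i ∈ Sᶜ, wt (f i) = W :=
      Finset.sum_add_sum_compl S _
    have hbij : ∑ i ∈ Sᶜ, wt (f i) = ∑ j ∈ S, wt (f (p j)) := by
      apply Finset.sum_nbij' (i := p) (j := p)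
      · intro i hi
        simp only [Finset.mem_compl] at hi
        have := (hS (p i)).mpr (by rw [ppi]; exact hi)
        exact this
      · intro j hj
        simp only [Finset.mem_compl]
        exact (hS j).mp hj
      · intro i _; exact ppi i
      · intro j _; exact ppi j
      · intro i hi; rw [ppi]
    have hpair : ∀ i ∈ S, wt (f i) + wt (f (p i)) = 0 := by
      intro i hi
      have := Finset.prod_ne_zero_iff.mp hη i hi
      exact wt_add_eq_zero_of_eta_ne_zero this
    have : ∑ i ∈ S, (wt (f i) + wt (f (p i))) = 0 := Finset.sum_eq_zero hpair
    rw [Finset.sum_add_distrib] at this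
    linarith
  -- from T: W < 0
  have hWneg : W < 0 := by
    have hsig : W = ∑ m, ∑ j, wt (f ⟨m, j⟩) := by
      rw [hW, ← Finset.univ_sigma_univ, Finset.sum_sigma]
    have hneg : ∀ m : Fin k, bw (fun j => f ⟨m, j⟩) ≤ -1 := by
      intro m
      have hTm := Finset.prod_ne_zero_iff.mp hT m (Finset.mem_univ m)
      by_contra hcon
      exact hTm (hIII m _ (by omega))
    have : ∑ m : Fin k, bw (fun j => f ⟨m, j⟩) ≤ ∑ _m : Fin k, (-1 : ℤ) :=
      Finset.sum_le_sum fun m _ => hneg m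
    simp only [Finset.sum_const, Finset.card_univ, Fintype.card_fin, nsmul_eq_mul,
      mul_neg_one] at this
    have heq : ∑ m : Fin k, bw (fun j => f ⟨m, j⟩) = W := by
      rw [hsig]
      exact Finset.sum_congr rfl fun m _ => bw_eq_sum _
    omega
  omega
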